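/- Let M be a matroid on a finite ground set E of size n with rank function rk and rank r = rk(E). If M has no isthmuses, then T(M;0,2) ≥ 2^(n−r), i.e. ∑_{S ⊆ E} (-1)^{r - rk(S)} ≥ 2^(n−r). -/

import Mathlib

/-- The rank of a set `X` in a matroid `M`: the largest cardinality of an
independent subset of `X`. -/
noncomputable def matroidRk {α : Type*} (M : Matroid α) (X : Set α) : ℕ :=
  sSup {n : ℕ | ∃ I, M.Indep I ∧ I ⊆ X ∧ I.ncard = n}

/-- An isthmus (coloop) of `M`: an element contained in every basis of `M`. -/
def IsIsthmus {α : Type*} (M : Matroid α) (e : α) : Prop := ∀ B, M.IsBase B → e ∈ B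

/-- A loop of `M`: an element contained in no basis of `M`. -/
def IsLoopElem {α : Type*} (M : Matroid α) (e : α) : Prop := ∀ B, M.IsBase B → e ∉ B

/-- A circuit of `M`: a minimal dependent set. -/
def IsCircuit {α : Type*} (M : Matroid α) (C : Set α) : Prop :=
  M.Dep C ∧ ∀ D, D ⊂ C → M.Indep D

/-- A cocircuit of `M`: a circuit of the dual matroid `M✶`. -/
def IsCocircuit {α : Type*} (M : Matroid α) (C : Set α) : Prop := IsCircuit M✶ C


section Abstract

variable {α : Type*} [DecidableEq α]

/-- If every element of `S` has rank zero, then `S` has rank zero. -/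
theorem rk_loops_zero (rk : Finset α → ℕ)
    (hsub : ∀ S T : Finset α, rk (S ∪ T) + rk (S ∩ T) ≤ rk S + rk T)
    (S : Finset α) (hS : ∀ e ∈ S, rk {e} = 0) (h0 : rk ∅ = 0) : rk S = 0 := by
  induction S using Finset.induction_on with
  | empty => exact h0
  | @insert a s ha IH =>
    have hs : rk s = 0 := IH (fun e he => hS e (Finset.mem_insert_of_mem he))
    have ha0 : rk {a} = 0 := hS a (Finset.mem_insert_self a s)
    have := hsub {a} s
    rw [ha0, hs] at this
    have hu : ({a} : Finset α) ∪ s = insert a s := by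
      rw [Finset.insert_eq]
    rw [hu] at this
    omega

/-- Nonnegativity of the signed corank sum, for any "rank function". -/
theorem sum_nonneg_abs : ∀ (n : ℕ) (E : Finset α) (rk : Finset α → ℕ), E.card ≤ n →
    (∀ S T : Finset α, S ⊆ T → rk S ≤ rk T) →
    (∀ S T : Finset α, rk (S ∪ T) + rk (S ∩ T) ≤ rk S + rk T) →
    (∀ (S : Finset α) (e : α), rk (insert e S) ≤ rk S + 1) →
    rk ∅ = 0 →
    0 ≤ ∑ S ∈ E.powerset, (-1 : ℤ) ^ (rk E - rk S) := by
  intro n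
  induction n with
  | zero =>
    intro E rk hcard _ _ _ _
    rw [Nat.le_zero, Finset.card_eq_zero] at hcard
    subst hcard
    simp
  | succ n IH =>
    intro E rk hcard hmono hsub hins h0
    rcases eq_or_ne E ∅ with rfl | hEne
    · simp
    by_cases hcol : ∃ e ∈ E, rk (E.erase e) < rk E
    · -- a coloop exists: the sum is zero
      obtain ⟨e, he, hlt⟩ := hcol
      have hiE : insert e (E.erase e) = E := Finset.insert_erase he
      have hr : rk E = rk (E.erase e) + 1 := by
        have := hins (E.erase e) e
        rw [hiE] at this
        omega
      rw [← hiE, Finset.sum_powerset_insert (Finset.notMem_erase e E)]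
      rw [hiE]
      rw [← Finset.sum_add_distrib]
      have : ∀ S ∈ (E.erase e).powerset,
          (-1 : ℤ) ^ (rk E - rk S) + (-1 : ℤ) ^ (rk E - rk (insert e S)) = 0 := by
        intro S hS
        rw [Finset.mem_powerset] at hS
        have h1 : rk (insert e S) = rk S + 1 := by
          have hsms := hsub (insert e S) (E.erase e)
          have hu : insert e S ∪ E.erase e = E := by
            rw [Finset.insert_union, Finset.union_eq_right.2 hS, hiE]
          have hi : insert e S ∩ E.erase e = S := by
            rw [Finset.insert_inter_of_notMem (Finset.notMem_erase e E),
              Finset.inter_eq_left.2 hS]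
          rw [hu, hi] at hsms
          have := hins S e
          omega
        have h2 : rk (insert e S) ≤ rk E := by
          apply hmono
          rw [← hiE]
          exact Finset.insert_subset_insert e hS
        have h3 : rk E - rk S = (rk E - rk (insert e S)) + 1 := by omega
        rw [h3, pow_succ]
        ring
      rw [Finset.sum_congr rfl this, Finset.sum_const, smul_zero]
    · -- no coloop
      push_neg at hcol
      have hncol : ∀ e ∈ E, rk (E.erase e) = rk E := fun e he =>
        le_antisymm (hmono _ _ (Finset.erase_subset e E)) (hcol e he)
      by_cases hloop : ∃ e ∈ E, rk {e} ≠ 0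
      · obtain ⟨e, he, hne⟩ := hloop
        have hone : rk {e} = 1 := by
          have := hins ∅ e
          rw [Finset.insert_empty] at this  -- maybe wrong name
          omega
        have hiE : insert e (E.erase e) = E := Finset.insert_erase he
        have hcard' : (E.erase e).card ≤ n := by
          have := Finset.card_erase_of_mem he
          omega
        rw [← hiE, Finset.sum_powerset_insert (Finset.notMem_erase e E)]
        rw [hiE]
        have hEe : rk (E.erase e) = rk E := hncol e he
        have hA : 0 ≤ ∑ S ∈ (E.erase e).powerset, (-1 : ℤ) ^ (rk E - rk S) := by
          have := IH (E.erase e) rk hcard' hmono hsub hins h0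
          rw [hEe] at this
          exact this
        -- contraction
        set rk' : Finset α → ℕ := fun S => rk (insert e S) - 1 with hrk'
        have hge1 : ∀ S : Finset α, 1 ≤ rk (insert e S) := by
          intro S
          have : ({e} : Finset α) ⊆ insert e S := by
            simp
          have := hmono _ _ this
          omega
        have hmono' : ∀ S T : Finset α, S ⊆ T → rk' S ≤ rk' T := by
          intro S T hST
          have := hmono _ _ (Finset.insert_subset_insert e hST)
          simp only [hrk']
          omega
        have hsub' : ∀ S T : Finset α, rk' (S ∪ T) + rk' (S ∩ T) ≤ rk' S + rk' T := by
          intro S T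
          have h := hsub (insert e S) (insert e T)
          have hu : insert e S ∪ insert e T = insert e (S ∪ T) := by
            simp [Finset.insert_union, Finset.union_insert]
          have hi : insert e S ∩ insert e T = insert e (S ∩ T) := by
            ext x; simp [Finset.mem_insert]; tauto
          rw [hu, hi] at h
          have := hge1 S; have := hge1 T; have := hge1 (S ∪ T); have := hge1 (S ∩ T)
          simp only [hrk']
          omega
        have hins' : ∀ (S : Finset α) (f : α), rk' (insert f S) ≤ rk' S + 1 := by
          intro S f
          have h := hins (insert e S) f
          rw [Finset.insert_comm] at h
          have := hge1 S
          simp only [hrk']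
          omega
        have h0' : rk' ∅ = 0 := by
          simp only [hrk']
          rw [Finset.insert_empty]
          omega
        have hB : 0 ≤ ∑ S ∈ (E.erase e).powerset, (-1 : ℤ) ^ (rk E - rk (insert e S)) := by
          have := IH (E.erase e) rk' hcard' hmono' hsub' hins' h0'
          have hexp : ∀ S : Finset α, rk' (E.erase e) - rk' S = rk E - rk (insert e S) := by
            intro S
            have h1 := hge1 S
            have h2 : rk (insert e (E.erase e)) = rk E := by rw [hiE]
            simp only [hrk']
            omega
          calc (0 : ℤ) ≤ ∑ S ∈ (E.erase e).powerset, (-1 : ℤ) ^ (rk' (E.erase e) - rk' S) := this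
            _ = _ := Finset.sum_congr rfl (fun S _ => by rw [hexp S])
        exact add_nonneg hA hB
      · push_neg at hloop
        have hrkE : rk E = 0 := rk_loops_zero rk hsub E hloop h0
        have : ∀ S ∈ E.powerset, (-1 : ℤ) ^ (rk E - rk S) = 1 := by
          intro S hS
          rw [hrkE]
          simp
        rw [Finset.sum_congr rfl this]
        simp

end Abstract


section AbstractB
variable {α : Type*} [DecidableEq α]

theorem sum_ge_abs :
    ∀ (n : ℕ) (E : Finset α) (rk : Finset α → ℕ), E.card ≤ n →
    (∀ S T : Finset α, S ⊆ T → rk S ≤ rk T) →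
    (∀ S T : Finset α, rk (S ∪ T) + rk (S ∩ T) ≤ rk S + rk T) →
    (∀ (S : Finset α) (e : α), rk (insert e S) ≤ rk S + 1) →
    rk ∅ = 0 →
    (∀ e ∈ E, rk (E.erase e) = rk E) →
    (2 : ℤ) ^ (E.card - rk E) ≤ ∑ S ∈ E.powerset, (-1 : ℤ) ^ (rk E - rk S) := by
  intro n
  induction n with
  | zero =>
    intro E rk hcard _ _ _ h0 _
    rw [Nat.le_zero, Finset.card_eq_zero] at hcard
    subst hcard
    simp [h0]
  | succ n IH =>
    intro E rk hcard hmono hsub hins h0 hncol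
    by_cases hr : rk E = 0
    · -- all terms are 1
      have hterm : ∀ S ∈ E.powerset, (-1 : ℤ) ^ (rk E - rk S) = 1 := by
        intro S hS
        rw [hr]
        simp
      rw [Finset.sum_congr rfl hterm, Finset.sum_const, Finset.card_powerset, hr,
        Nat.sub_zero]
      simp
    · -- pick a non-loop e
      have hnl : ∃ e ∈ E, rk {e} ≠ 0 := by
        by_contra h
        push_neg at h
        exact hr (rk_loops_zero rk hsub E h h0)
      obtain ⟨e, he, hne⟩ := hnl
      have hone : rk {e} = 1 := by
        have := hins ∅ e
        rw [Finset.insert_empty] at this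
        omega
      have hiE : insert e (E.erase e) = E := Finset.insert_erase he
      have hcard' : (E.erase e).card ≤ n := by
        have := Finset.card_erase_of_mem he
        have : 1 ≤ E.card := Finset.card_pos.2 ⟨e, he⟩
        omega
      have hEe : rk (E.erase e) = rk E := hncol e he
      rw [← hiE, Finset.sum_powerset_insert (Finset.notMem_erase e E)]
      rw [hiE]
      have hA : 0 ≤ ∑ S ∈ (E.erase e).powerset, (-1 : ℤ) ^ (rk E - rk S) := by
        have := sum_nonneg_abs n (E.erase e) rk hcard' hmono hsub hins h0
        rwa [hEe] at this
      -- contraction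
      set rk' : Finset α → ℕ := fun S => rk (insert e S) - 1 with hrk'
      have hge1 : ∀ S : Finset α, 1 ≤ rk (insert e S) := by
        intro S
        have hsub1 : ({e} : Finset α) ⊆ insert e S := by simp
        have := hmono _ _ hsub1
        omega
      have hmono' : ∀ S T : Finset α, S ⊆ T → rk' S ≤ rk' T := by
        intro S T hST
        have := hmono _ _ (Finset.insert_subset_insert e hST)
        simp only [hrk']
        omega
      have hsub' : ∀ S T : Finset α, rk' (S ∪ T) + rk' (S ∩ T) ≤ rk' S + rk' T := by
        intro S T
        have h := hsub (insert e S) (insert e T)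
        have hu : insert e S ∪ insert e T = insert e (S ∪ T) := by
          simp [Finset.insert_union, Finset.union_insert]
        have hi : insert e S ∩ insert e T = insert e (S ∩ T) := by
          ext x; simp [Finset.mem_insert]; tauto
        rw [hu, hi] at h
        have := hge1 S; have := hge1 T; have := hge1 (S ∪ T); have := hge1 (S ∩ T)
        simp only [hrk']
        omega
      have hins' : ∀ (S : Finset α) (f : α), rk' (insert f S) ≤ rk' S + 1 := by
        intro S f
        have h := hins (insert e S) f
        rw [Finset.insert_comm] at h
        have := hge1 S
        simp only [hrk']
        omega
      have h0' : rk' ∅ = 0 := by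
        simp only [hrk']
        rw [Finset.insert_empty]
        omega
      have hncol' : ∀ x ∈ E.erase e, rk' ((E.erase e).erase x) = rk' (E.erase e) := by
        intro x hx
        obtain ⟨hxe, hxE⟩ := Finset.mem_erase.1 hx
        have h1 : insert e ((E.erase e).erase x) = E.erase x := by
          rw [Finset.erase_right_comm]
          exact Finset.insert_erase (Finset.mem_erase.2 ⟨Ne.symm hxe, he⟩)
        simp only [hrk']
        rw [h1, hiE, hncol x hxE]
      have hB := IH (E.erase e) rk' hcard' hmono' hsub' hins' h0' hncol'
      have hrE1 : 1 ≤ rk E := by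
        have := hmono {e} E (Finset.singleton_subset_iff.2 he)
        omega
      have hexp : ∀ S : Finset α, rk' (E.erase e) - rk' S = rk E - rk (insert e S) := by
        intro S
        have h1 := hge1 S
        have h2 : rk (insert e (E.erase e)) = rk E := by rw [hiE]
        simp only [hrk']
        omega
      have hcards : (E.erase e).card = E.card - 1 := Finset.card_erase_of_mem he
      have hcard1 : 1 ≤ E.card := Finset.card_pos.2 ⟨e, he⟩
      have hexp2 : (E.erase e).card - rk' (E.erase e) = E.card - rk E := by
        have h2 : rk (insert e (E.erase e)) = rk E := by rw [hiE]
        simp only [hrk']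
        omega
      rw [hexp2, Finset.sum_congr rfl (fun S _ => by rw [hexp S])] at hB
      linarith [hA, hB]
end AbstractB


section Glue
open Set
variable {α : Type*} [Fintype α] {M : Matroid α}

theorem matroidRk_bddAbove (M : Matroid α) (X : Set α) :
    BddAbove {n : ℕ | ∃ I, M.Indep I ∧ I ⊆ X ∧ I.ncard = n} := by
  refine ⟨Fintype.card α, ?_⟩
  rintro n ⟨I, -, -, rfl⟩
  have := Set.ncard_le_ncard (Set.subset_univ I) Set.finite_univ
  simpa [Set.ncard_univ] using this

theorem matroidRk_eq_of_basis {I X : Set α} (hE : M.E = Set.univ) (hI : M.IsBasis I X) :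
    matroidRk M X = I.ncard := by
  apply le_antisymm
  · refine csSup_le ⟨0, ⟨∅, M.empty_indep, Set.empty_subset X, Set.ncard_empty α⟩⟩ ?_
    rintro n ⟨J, hJ, hJX, rfl⟩
    obtain ⟨J', hJ', hJJ'⟩ := hJ.subset_isBasis_of_subset hJX
      (by rw [hE]; exact Set.subset_univ X)
    calc J.ncard ≤ J'.ncard := Set.ncard_le_ncard hJJ' (Set.toFinite J')
      _ = I.ncard := hJ'.isBase_restrict.ncard_eq_ncard_of_isBase hI.isBase_restrict
  · exact le_csSup (matroidRk_bddAbove M X) ⟨I, hI.indep, hI.subset, rfl⟩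

theorem ncard_le_matroidRk {J X : Set α} (hJ : M.Indep J) (hJX : J ⊆ X) :
    J.ncard ≤ matroidRk M X :=
  le_csSup (matroidRk_bddAbove M X) ⟨J, hJ, hJX, rfl⟩

theorem matroidRk_mono (hE : M.E = Set.univ) {X Y : Set α} (hXY : X ⊆ Y) :
    matroidRk M X ≤ matroidRk M Y := by
  obtain ⟨I, hI⟩ := M.exists_isBasis X (by rw [hE]; exact Set.subset_univ X)
  rw [matroidRk_eq_of_basis hE hI]
  exact ncard_le_matroidRk hI.indep (hI.subset.trans hXY)

theorem matroidRk_insert_le (hE : M.E = Set.univ) (X : Set α) (e : α) :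
    matroidRk M (insert e X) ≤ matroidRk M X + 1 := by
  obtain ⟨I, hI⟩ := M.exists_isBasis X (by rw [hE]; exact Set.subset_univ X)
  obtain ⟨J, hJ, hIJ⟩ := hI.indep.subset_isBasis_of_subset
    (hI.subset.trans (Set.subset_insert e X)) (by rw [hE]; exact Set.subset_univ _)
  rw [matroidRk_eq_of_basis hE hI, matroidRk_eq_of_basis hE hJ]
  have hJsub : J ⊆ insert e I := by
    intro x hxJ
    rcases hJ.subset hxJ with rfl | hxX
    · exact Set.mem_insert x I
    · exact Set.mem_insert_of_mem e
        (hI.mem_of_insert_indep hxX (hJ.indep.subset (Set.insert_subset hxJ hIJ)))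
  calc J.ncard ≤ (insert e I).ncard := Set.ncard_le_ncard hJsub (Set.toFinite _)
    _ ≤ I.ncard + 1 := Set.ncard_insert_le e I

theorem matroidRk_submod (hE : M.E = Set.univ) (X Y : Set α) :
    matroidRk M (X ∪ Y) + matroidRk M (X ∩ Y) ≤ matroidRk M X + matroidRk M Y := by
  obtain ⟨I, hI⟩ := M.exists_isBasis (X ∩ Y) (by rw [hE]; exact Set.subset_univ _)
  obtain ⟨J, hJ, hIJ⟩ := hI.exists_isBasis_inter_eq_of_superset
    (Set.inter_subset_left.trans Set.subset_union_left)
    (by rw [hE]; exact Set.subset_univ _)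
  rw [matroidRk_eq_of_basis hE hI, matroidRk_eq_of_basis hE hJ]
  have h1 : (J ∩ X).ncard ≤ matroidRk M X :=
    ncard_le_matroidRk (hJ.indep.subset Set.inter_subset_left) Set.inter_subset_right
  have h2 : (J ∩ Y).ncard ≤ matroidRk M Y :=
    ncard_le_matroidRk (hJ.indep.subset Set.inter_subset_left) Set.inter_subset_right
  have hu : (J ∩ X) ∪ (J ∩ Y) = J := by
    rw [← Set.inter_union_distrib_left]
    exact Set.inter_eq_left.2 hJ.subset
  have hi : (J ∩ X) ∩ (J ∩ Y) = I := by
    rw [← Set.inter_inter_distrib_left]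
    exact hIJ
  have hkey := Set.ncard_union_add_ncard_inter (J ∩ X) (J ∩ Y) (Set.toFinite _)
    (Set.toFinite _)
  rw [hu, hi] at hkey
  omega

theorem matroidRk_empty (hE : M.E = Set.univ) : matroidRk M (∅ : Set α) = 0 := by
  obtain ⟨I, hI⟩ := M.exists_isBasis (∅ : Set α) (by rw [hE]; exact Set.subset_univ _)
  rw [matroidRk_eq_of_basis hE hI, Set.subset_empty_iff.1 hI.subset, Set.ncard_empty]

end Glue

/-- If a rank-`r` matroid `M` on a finite ground set of size `n` has no isthmuses, then
`T(M;0,2) ≥ 2^(n-r)`. -/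
theorem isthmusFree_T02_ge {α : Type*} [Fintype α] (M : Matroid α)
    (hE : M.E = Set.univ)
    (hIsth : ∀ e : α, ¬ IsIsthmus M e) :
    (2 : ℤ) ^ (Fintype.card α - matroidRk M M.E) ≤
      ∑ S : Finset α, (-1 : ℤ) ^ (matroidRk M M.E - matroidRk M (S : Set α)) := by
  classical
  have hkey := sum_ge_abs (Finset.univ.card) (Finset.univ : Finset α)
    (fun S : Finset α => matroidRk M ↑S) le_rfl
    (fun S T h => matroidRk_mono hE (Finset.coe_subset.2 h))
    (fun S T => by
      have := matroidRk_submod hE (↑S : Set α) ↑T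
      simpa [Finset.coe_union, Finset.coe_inter] using this)
    (fun S e => by
      have := matroidRk_insert_le hE (↑S : Set α) e
      simpa [Finset.coe_insert] using this)
    (by simpa [Finset.coe_empty] using matroidRk_empty hE)
    (fun e _ => by
      have h1 : ∃ B, M.IsBase B ∧ e ∉ B := by
        have := hIsth e
        unfold IsIsthmus at this
        push_neg at this
        exact this
      obtain ⟨B, hB, heB⟩ := h1
      have hBb : M.IsBasis B Set.univ := by
        have := hB.isBasis_ground
        rwa [hE] at this
      have hle : matroidRk M (Set.univ \ {e}) ≤ matroidRk M Set.univ :=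
        matroidRk_mono hE Set.diff_subset
      have hge : matroidRk M Set.univ ≤ matroidRk M (Set.univ \ {e}) := by
        rw [matroidRk_eq_of_basis hE hBb]
        exact ncard_le_matroidRk hBb.indep
          (Set.subset_diff_singleton (Set.subset_univ B) heB)
      have hcoe : ((Finset.univ.erase e : Finset α) : Set α) = Set.univ \ {e} := by
        simp [Finset.coe_erase]
      show matroidRk M ↑(Finset.univ.erase e) = matroidRk M ↑(Finset.univ : Finset α)
      rw [hcoe, Finset.coe_univ]
      omega)
  rw [Finset.powerset_univ] at hkey
  have h1 : matroidRk M M.E = matroidRk M (↑(Finset.univ : Finset α)) := by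
    rw [hE, Finset.coe_univ]
  have h2 : Fintype.card α = (Finset.univ : Finset α).card := (Finset.card_univ).symm
  rw [h1, h2]
  exact hkey
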